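/- Fix parameters r, r̃ ∈ ℝ, a, b > 0, K, K̃ > 0 and probability mass functions q, q̃ on the nonnegative integers with means e^r, e^{r̃}, finite variances, and q(k) > 0, q̃(k) > 0 for all k ≥ 1. Then the stochastic Ricker competition chain admits a quasi-stationary distribution: there exist λ ∈ (0,1) and a probability measure π on the all-positive states {(m,n) ∈ ℤ² : m ≥ 1, n ≥ 1} such that Σ_{(i,j)} π(i,j)·Q((i,j),(m,n)) = λ·π(m,n) for all m, n ≥ 1. -/

import Mathlib

open Filter

/-- The modified offspring distribution: given inhibition exponent c, the litter size has
P(ξ = k) = e^{−c}·q(k) for k ≥ 1 and P(ξ = 0) = 1 − e^{−c}·(1 − q(0)). -/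
noncomputable def modPMF (c : ℝ) (q : ℕ → ℝ) : ℕ → ℝ :=
  fun k => if k = 0 then 1 - Real.exp (-c) * (1 - q 0) else Real.exp (-c) * q k

/-- `convPow f m` is the m-fold convolution power of the pmf `f` on ℕ: the distribution of
the sum of m i.i.d. random variables with pmf `f` (the point mass at 0 when m = 0). -/
noncomputable def convPow (f : ℕ → ℝ) : ℕ → ℕ → ℝ
  | 0, k => if k = 0 then 1 else 0
  | m + 1, k => ∑ i ∈ Finset.range (k + 1), f i * convPow f m (k - i)

/-- The transition probabilities of the stochastic Ricker competition chain (U_t, V_t) on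
ℤ_{≥0}²: from (m,n), U_{t+1} is a sum of m i.i.d. litters with pmf `modPMF (K(m+bn)) q` and,
independently, V_{t+1} is a sum of n i.i.d. litters with pmf `modPMF (K̃(am+n)) q̃`
(a coordinate equal to 0 stays 0). -/
noncomputable def rickerKernel (a b K K' : ℝ) (q q' : ℕ → ℝ) :
    ℕ × ℕ → ℕ × ℕ → ℝ :=
  fun p p' =>
    convPow (modPMF (K * ((p.1 : ℝ) + b * (p.2 : ℝ))) q) p.1 p'.1 *
    convPow (modPMF (K' * (a * (p.1 : ℝ) + (p.2 : ℝ))) q') p.2 p'.2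

/-- t-step transition probabilities of a Markov kernel on ℤ_{≥0}². -/
noncomputable def kernelPow (P : ℕ × ℕ → ℕ × ℕ → ℝ) : ℕ → ℕ × ℕ → ℕ × ℕ → ℝ
  | 0, p, p' => if p = p' then 1 else 0
  | t + 1, p, p' => ∑' s : ℕ × ℕ, P p s * kernelPow P t s p'

/-- `IsQSD P π lam` : π is a quasi-stationary distribution of the chain with transition
probabilities `P`, with eigenvalue `lam`: π is a probability distribution supported on
the all-positive states {(m,n) : m ≥ 1, n ≥ 1}, and π·Q = lam·π where Q is the
restriction of P to the all-positive states. -/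
def IsQSD (P : ℕ × ℕ → ℕ × ℕ → ℝ) (π : ℕ × ℕ → ℝ) (lam : ℝ) : Prop :=
  (∀ p, 0 ≤ π p) ∧
  (∀ p : ℕ × ℕ, p.1 = 0 ∨ p.2 = 0 → π p = 0) ∧
  HasSum π 1 ∧
  (∀ p : ℕ × ℕ, 1 ≤ p.1 → 1 ≤ p.2 →
    HasSum (fun s : ℕ × ℕ => π s * P s p) (lam * π p))

set_option maxHeartbeats 800000

open Finset Topology

namespace QSDwork

lemma hasSum_antidiag {F : ℕ × ℕ → ℝ} {S : ℝ} (h : HasSum F S) :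
    HasSum (fun n : ℕ => ∑ i ∈ Finset.range (n + 1), F (i, n - i)) S := by
  have h2 := (Finset.HasAntidiagonal.sigmaAntidiagonalEquivProd.hasSum_iff).mpr h
  refine HasSum.sigma h2 fun n => ?_
  rw [← Finset.Nat.sum_antidiagonal_eq_sum_range_succ_mk]
  rw [← Finset.sum_attach]
  exact hasSum_fintype _

lemma summable_prod_mul {f g : ℕ → ℝ} (hf0 : ∀ k, 0 ≤ f k) (hg0 : ∀ k, 0 ≤ g k)
    (hf : Summable f) (hg : Summable g) :
    Summable (fun x : ℕ × ℕ => f x.1 * g x.2) := by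
  apply summable_mul_of_summable_norm (R := ℝ)
  · exact hf.congr (fun k => (Real.norm_of_nonneg (hf0 k)).symm)
  · exact hg.congr (fun k => (Real.norm_of_nonneg (hg0 k)).symm)

lemma hasSum_prod_mul {f g : ℕ → ℝ} {A B : ℝ} (hf0 : ∀ k, 0 ≤ f k) (hg0 : ∀ k, 0 ≤ g k)
    (hf : HasSum f A) (hg : HasSum g B) :
    HasSum (fun x : ℕ × ℕ => f x.1 * g x.2) (A * B) :=
  hf.mul hg (summable_prod_mul hf0 hg0 hf.summable hg.summable)

lemma hasSum_conv {f g : ℕ → ℝ} {A B : ℝ} (hf0 : ∀ k, 0 ≤ f k) (hg0 : ∀ k, 0 ≤ g k)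
    (hf : HasSum f A) (hg : HasSum g B) :
    HasSum (fun k : ℕ => ∑ i ∈ Finset.range (k + 1), f i * g (k - i)) (A * B) :=
  hasSum_antidiag (F := fun x : ℕ × ℕ => f x.1 * g x.2) (hasSum_prod_mul hf0 hg0 hf hg)

lemma hasSum_conv_moment {f g : ℕ → ℝ} {A B Ma Mb : ℝ}
    (hf0 : ∀ k, 0 ≤ f k) (hg0 : ∀ k, 0 ≤ g k)
    (hf : HasSum f A) (hg : HasSum g B)
    (hmf : HasSum (fun k : ℕ => (k : ℝ) * f k) Ma) (hmg : HasSum (fun k : ℕ => (k : ℝ) * g k) Mb) :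
    HasSum (fun k : ℕ => (k : ℝ) * ∑ i ∈ Finset.range (k + 1), f i * g (k - i))
      (Ma * B + A * Mb) := by
  have h1 : HasSum (fun x : ℕ × ℕ => ((x.1 : ℝ) * f x.1) * g x.2) (Ma * B) :=
    hasSum_prod_mul (fun k => mul_nonneg (Nat.cast_nonneg k) (hf0 k)) hg0 hmf hg
  have h2 : HasSum (fun x : ℕ × ℕ => f x.1 * ((x.2 : ℝ) * g x.2)) (A * Mb) :=
    hasSum_prod_mul hf0 (fun k => mul_nonneg (Nat.cast_nonneg k) (hg0 k)) hf hmg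
  have e1 : (fun x : ℕ × ℕ => ((x.1 : ℝ) + (x.2 : ℝ)) * (f x.1 * g x.2))
      = fun x : ℕ × ℕ => ((x.1 : ℝ) * f x.1) * g x.2 + f x.1 * ((x.2 : ℝ) * g x.2) := by
    funext x; ring
  have h3 : HasSum (fun x : ℕ × ℕ => ((x.1 : ℝ) + (x.2 : ℝ)) * (f x.1 * g x.2))
      (Ma * B + A * Mb) := by rw [e1]; exact h1.add h2
  have h4 := hasSum_antidiag (F := fun x : ℕ × ℕ => ((x.1 : ℝ) + (x.2 : ℝ)) * (f x.1 * g x.2)) h3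
  have e2 : (fun n : ℕ => ∑ i ∈ Finset.range (n + 1), ((i : ℝ) + ((n - i : ℕ) : ℝ)) * (f i * g (n - i)))
      = fun n : ℕ => (n : ℝ) * ∑ i ∈ Finset.range (n + 1), f i * g (n - i) := by
    funext n
    rw [Finset.mul_sum]
    refine Finset.sum_congr rfl fun i hi => ?_
    have hin : i + (n - i) = n := Nat.add_sub_cancel' (Nat.lt_succ_iff.mp (Finset.mem_range.mp hi))
    have hcast : ((i : ℝ) + ((n - i : ℕ) : ℝ)) = (n : ℝ) := by rw [← Nat.cast_add, hin]
    rw [hcast]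
  rw [← e2]
  exact h4


section PMF

lemma modPMF_hasSum {c : ℝ} {q : ℕ → ℝ} (hq1 : HasSum q 1) :
    HasSum (modPMF c q) 1 := by
  set E := Real.exp (-c) with hE
  have h1 : HasSum (fun k : ℕ => E * q k) E := by simpa using hq1.mul_left E
  have h2 : HasSum (fun k : ℕ => if k = 0 then 1 - E else 0) (1 - E) := hasSum_ite_eq 0 (1 - E)
  have e : modPMF c q = fun k : ℕ => E * q k + (if k = 0 then 1 - E else 0) := by
    funext k
    rcases Nat.eq_zero_or_pos k with hk | hk
    · subst hk; simp [modPMF]; ring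
    · simp [modPMF, Nat.pos_iff_ne_zero.mp hk, hE]
  rw [e]
  simpa using h1.add h2

lemma modPMF_mean {c r : ℝ} {q : ℕ → ℝ} (hqmean : HasSum (fun k : ℕ => (k : ℝ) * q k) (Real.exp r)) :
    HasSum (fun k : ℕ => (k : ℝ) * modPMF c q k) (Real.exp (-c) * Real.exp r) := by
  have e : (fun k : ℕ => (k : ℝ) * modPMF c q k)
      = fun k : ℕ => Real.exp (-c) * ((k : ℝ) * q k) := by
    funext k
    rcases Nat.eq_zero_or_pos k with hk | hk
    · subst hk; simp
    · simp [modPMF, Nat.pos_iff_ne_zero.mp hk]; ring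
  rw [e]
  exact hqmean.mul_left _

lemma modPMF_pos' {c : ℝ} {q : ℕ → ℝ} (hc : 0 < c) (hq : ∀ k, 0 ≤ q k) (hq1 : HasSum q 1)
    (hqpos : ∀ k : ℕ, 1 ≤ k → 0 < q k) (k : ℕ) : 0 < modPMF c q k := by
  have hE1 : Real.exp (-c) < 1 := Real.exp_lt_one_iff.mpr (by linarith)
  have hE0 : 0 < Real.exp (-c) := Real.exp_pos _
  have hq01 : q 0 ≤ 1 := le_hasSum hq1 0 (fun i _ => hq i)
  rcases Nat.eq_zero_or_pos k with hk | hk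
  · subst hk
    have e0 : modPMF c q 0 = 1 - Real.exp (-c) * (1 - q 0) := by simp [modPMF]
    rw [e0]
    nlinarith [hq 0]
  · have hkne : k ≠ 0 := Nat.pos_iff_ne_zero.mp hk
    simp only [modPMF, if_neg hkne]
    exact mul_pos hE0 (hqpos k hk)

end PMF

section ConvPow

variable {f : ℕ → ℝ}

lemma convPow_nonneg (hf0 : ∀ k, 0 ≤ f k) : ∀ m k, 0 ≤ convPow f m k := by
  intro m
  induction m with
  | zero => intro k; simp only [convPow]; split <;> norm_num
  | succ m ih =>
    intro k
    simp only [convPow]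
    exact Finset.sum_nonneg fun i _ => mul_nonneg (hf0 i) (ih (k - i))

lemma convPow_hasSum (hf0 : ∀ k, 0 ≤ f k) (hf1 : HasSum f 1) :
    ∀ m, HasSum (convPow f m) 1 := by
  intro m
  induction m with
  | zero => exact hasSum_ite_eq 0 1
  | succ m ih =>
    have := hasSum_conv hf0 (convPow_nonneg hf0 m) hf1 ih
    simpa only [convPow, one_mul] using this

lemma convPow_mean {μ : ℝ} (hf0 : ∀ k, 0 ≤ f k) (hf1 : HasSum f 1)
    (hm : HasSum (fun k : ℕ => (k : ℝ) * f k) μ) :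
    ∀ m : ℕ, HasSum (fun k : ℕ => (k : ℝ) * convPow f m k) ((m : ℝ) * μ) := by
  intro m
  induction m with
  | zero =>
    have : (fun k : ℕ => (k : ℝ) * convPow f 0 k) = fun _ : ℕ => (0 : ℝ) := by
      funext k
      simp only [convPow]
      split
      · rename_i h; subst h; simp
      · simp
    rw [this]
    simpa using hasSum_zero
  | succ m ih =>
    have h := hasSum_conv_moment hf0 (convPow_nonneg hf0 m) hf1 (convPow_hasSum hf0 hf1 m) hm ih
    have e : μ * 1 + 1 * ((m : ℝ) * μ) = ((m + 1 : ℕ) : ℝ) * μ := by push_cast; ring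
    rw [e] at h
    simpa only [convPow] using h

lemma convPow_zero_pos (hf : ∀ k, 0 < f k) : ∀ m, 0 < convPow f m 0 := by
  intro m
  induction m with
  | zero => simp [convPow]
  | succ m ih =>
    have : convPow f (m + 1) 0 = f 0 * convPow f m 0 := by
      simp [convPow]
    rw [this]
    exact mul_pos (hf 0) ih

lemma convPow_pos (hf : ∀ k, 0 < f k) (m : ℕ) (hm : 1 ≤ m) (k : ℕ) :
    0 < convPow f m k := by
  obtain ⟨m', rfl⟩ : ∃ m', m = m' + 1 := ⟨m - 1, (Nat.succ_pred_eq_of_pos hm).symm⟩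
  show 0 < ∑ i ∈ Finset.range (k + 1), f i * convPow f m' (k - i)
  apply Finset.sum_pos' (fun i _ => mul_nonneg (hf i).le (convPow_nonneg (fun j => (hf j).le) m' (k - i)))
  exact ⟨k, Finset.self_mem_range_succ k, by
    simpa using mul_pos (hf k) (convPow_zero_pos hf m')⟩

lemma convPow_le_one (hf0 : ∀ k, 0 ≤ f k) (hf1 : HasSum f 1) (m k : ℕ) :
    convPow f m k ≤ 1 :=
  le_hasSum (convPow_hasSum hf0 hf1 m) k (fun i _ => convPow_nonneg hf0 m i)

end ConvPow


section Perron

variable {ι : Type*} [Fintype ι] [Nonempty ι]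

lemma perron (A : ι → ι → ℝ) (hA : ∀ i j, 0 < A i j) :
    ∃ (lam : ℝ) (x : ι → ℝ), 0 < lam ∧ (∀ i, 0 < x i) ∧ (∑ i, x i) = 1 ∧
      ∀ j, (∑ i, x i * A i j) = lam * x j := by
  classical
  set T : ℝ := ∑ i, ∑ j, A i j with hT
  -- a uniform lower bound on the entries of A
  obtain ⟨p0, -, hp0⟩ := Finset.exists_min_image (Finset.univ ×ˢ Finset.univ)
    (fun p : ι × ι => A p.1 p.2) (by simp)
  set ε : ℝ := A p0.1 p0.2 with hε
  have hεpos : 0 < ε := hA _ _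
  have hεle : ∀ i j, ε ≤ A i j := fun i j => hp0 (i, j) (by simp)
  set c : ℕ := Fintype.card ι with hc
  have hcpos : 0 < c := Fintype.card_pos
  have hcR : (0 : ℝ) < c := by exact_mod_cast hcpos
  -- the feasible set
  set C : Set ((ι → ℝ) × ℝ) :=
    {p | p.1 ∈ stdSimplex ℝ ι ∧ p.2 ∈ Set.Icc (0 : ℝ) T ∧
      ∀ j, p.2 * p.1 j ≤ ∑ i, p.1 i * A i j} with hCdef
  have hCclosed : IsClosed C := by
    have h1 : IsClosed {p : (ι → ℝ) × ℝ | p.1 ∈ stdSimplex ℝ ι} :=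
      (isClosed_stdSimplex ℝ ι).preimage continuous_fst
    have h2 : IsClosed {p : (ι → ℝ) × ℝ | p.2 ∈ Set.Icc (0 : ℝ) T} :=
      isClosed_Icc.preimage continuous_snd
    have h3 : ∀ j, IsClosed {p : (ι → ℝ) × ℝ | p.2 * p.1 j ≤ ∑ i, p.1 i * A i j} := by
      intro j
      apply isClosed_le
      · exact continuous_snd.mul ((continuous_apply j).comp continuous_fst)
      · exact continuous_finset_sum _ fun i _ =>
          (((continuous_apply i).comp continuous_fst).mul continuous_const)
    have : C = ({p : (ι → ℝ) × ℝ | p.1 ∈ stdSimplex ℝ ι} ∩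
        {p : (ι → ℝ) × ℝ | p.2 ∈ Set.Icc (0 : ℝ) T}) ∩
        ⋂ j, {p : (ι → ℝ) × ℝ | p.2 * p.1 j ≤ ∑ i, p.1 i * A i j} := by
      ext p
      simp only [hCdef, Set.mem_setOf_eq, Set.mem_inter_iff, Set.mem_iInter]
      tauto
    rw [this]
    exact (h1.inter h2).inter (isClosed_iInter h3)
  have hCcompact : IsCompact C := by
    refine IsCompact.of_isClosed_subset (s := stdSimplex ℝ ι ×ˢ Set.Icc (0 : ℝ) T)
      ((isCompact_stdSimplex ℝ ι).prod isCompact_Icc) hCclosed ?_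
    intro p hp
    exact Set.mem_prod.mpr ⟨hp.1, hp.2.1⟩
  -- feasible point with positive t
  set u : ι → ℝ := fun _ => (c : ℝ)⁻¹ with hu
  have husimplex : u ∈ stdSimplex ℝ ι := by
    constructor
    · intro i; positivity
    · simp [hu, Finset.sum_const, hc]
  have hcolsum : ∀ j, (c : ℝ) * ε ≤ ∑ i, A i j := by
    intro j
    calc (c : ℝ) * ε = ∑ _i : ι, ε := by rw [Finset.sum_const, hc]; simp [mul_comm]
    _ ≤ ∑ i, A i j := Finset.sum_le_sum fun i _ => hεle i j
  have hTbound : (c : ℝ) * ε ≤ T := by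
    have h1 : ∀ i, (c : ℝ) * ε ≤ ∑ j, A i j := by
      intro i
      calc (c : ℝ) * ε = ∑ _j : ι, ε := by rw [Finset.sum_const, hc]; simp [mul_comm]
      _ ≤ ∑ j, A i j := Finset.sum_le_sum fun j _ => hεle i j
    obtain ⟨i0⟩ := ‹Nonempty ι›
    calc (c : ℝ) * ε ≤ ∑ j, A i0 j := h1 i0
    _ ≤ T := Finset.single_le_sum (fun i _ => Finset.sum_nonneg fun j _ => (hA i j).le)
        (Finset.mem_univ i0)
  have humem : (u, (c : ℝ) * ε) ∈ C := by
    refine ⟨husimplex, ⟨by positivity, hTbound⟩, ?_⟩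
    intro j
    have : ((c : ℝ) * ε) * u j = ε := by
      simp only [hu]
      field_simp
    rw [this]
    calc ε ≤ (c : ℝ)⁻¹ * ((c : ℝ) * ε) := by field_simp; exact le_rfl
    _ ≤ (c : ℝ)⁻¹ * ∑ i, A i j := by
        apply mul_le_mul_of_nonneg_left (hcolsum j) (by positivity)
    _ = ∑ i, u i * A i j := by rw [Finset.mul_sum]
  -- maximize t over C
  obtain ⟨P, hPC, hPmax⟩ := hCcompact.exists_isMaxOn ⟨_, humem⟩
    continuous_snd.continuousOn
  set x : ι → ℝ := P.1 with hxdef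
  set t : ℝ := P.2 with htdef
  obtain ⟨hxsimp, htIcc, hineq⟩ := hPC
  have ht0 : (c : ℝ) * ε ≤ t := hPmax humem
  have htpos : 0 < t := lt_of_lt_of_le (by positivity) ht0
  set y : ι → ℝ := fun j => ∑ i, x i * A i j with hy
  have hxi0 : ∃ i0, 0 < x i0 := by
    by_contra hcon
    push_neg at hcon
    have hall : ∀ i, x i = 0 := fun i => le_antisymm (hcon i) (hxsimp.1 i)
    have h0 : ∑ i, P.1 i = 0 := Finset.sum_eq_zero fun i _ => hall i
    rw [hxsimp.2] at h0
    exact one_ne_zero h0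
  have hypos : ∀ j, 0 < y j := by
    intro j
    obtain ⟨i0, hi0⟩ := hxi0
    calc (0 : ℝ) < x i0 * A i0 j := mul_pos hi0 (hA i0 j)
    _ ≤ y j := Finset.single_le_sum
        (fun i _ => mul_nonneg (hxsimp.1 i) (hA i j).le) (Finset.mem_univ i0)
  -- the eigen equation
  have heq : ∀ j, ∑ i, x i * A i j = t * x j := by
    by_contra hcon
    push_neg at hcon
    obtain ⟨j0, hj0⟩ := hcon
    set v : ι → ℝ := fun j => y j - t * x j with hv
    have hvnn : ∀ j, 0 ≤ v j := fun j => sub_nonneg.mpr (hineq j)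
    have hvj0 : 0 < v j0 := lt_of_le_of_ne (hvnn j0) (by
      simp only [hv]
      intro hcontra
      exact hj0 (by linarith [hcontra.symm]))
    set w : ι → ℝ := fun k => ∑ j, v j * A j k with hw
    have hwpos : ∀ k, 0 < w k := by
      intro k
      calc (0 : ℝ) < v j0 * A j0 k := mul_pos hvj0 (hA j0 k)
      _ ≤ w k := Finset.single_le_sum
          (fun j _ => mul_nonneg (hvnn j) (hA j k).le) (Finset.mem_univ j0)
    have hyA : ∀ k, ∑ j, y j * A j k = w k + t * y k := by
      intro k
      have e1 : ∀ j, y j * A j k = v j * A j k + t * (x j * A j k) := by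
        intro j; simp only [hv]; ring
      rw [Finset.sum_congr rfl fun j _ => e1 j, Finset.sum_add_distrib, ← Finset.mul_sum]
    obtain ⟨k0, -, hk0⟩ := Finset.exists_min_image Finset.univ
      (fun k => w k / y k) ⟨Classical.arbitrary ι, Finset.mem_univ _⟩
    set δ : ℝ := w k0 / y k0 with hδ
    have hδpos : 0 < δ := div_pos (hwpos k0) (hypos k0)
    have hδle : ∀ k, δ * y k ≤ w k := by
      intro k
      have := hk0 k (Finset.mem_univ k)
      rw [le_div_iff₀ (hypos k)] at this
      linarith [this]
    have hyineq : ∀ k, (t + δ) * y k ≤ ∑ j, y j * A j k := by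
      intro k
      rw [hyA k]
      have hexp : (t + δ) * y k = t * y k + δ * y k := by ring
      rw [hexp]
      linarith [hδle k]
    set S : ℝ := ∑ j, y j with hS
    have hSpos : 0 < S :=
      Finset.sum_pos (fun j _ => hypos j) Finset.univ_nonempty
    set z : ι → ℝ := fun j => y j / S with hz
    have hzsimp : z ∈ stdSimplex ℝ ι := by
      constructor
      · intro j; exact div_nonneg (hypos j).le hSpos.le
      · simp only [hz]
        rw [← Finset.sum_div]
        field_simp
        exact hS.symm
    have hzineq : ∀ k, (t + δ) * z k ≤ ∑ j, z j * A j k := by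
      intro k
      have h1 := hyineq k
      have h2 := mul_le_mul_of_nonneg_right h1 (inv_nonneg.mpr hSpos.le)
      calc (t + δ) * z k = ((t + δ) * y k) * S⁻¹ := by
            simp only [hz, div_eq_mul_inv]; ring
        _ ≤ (∑ j, y j * A j k) * S⁻¹ := h2
        _ = ∑ j, z j * A j k := by
            rw [Finset.sum_mul]
            refine Finset.sum_congr rfl fun j _ => ?_
            simp only [hz, div_eq_mul_inv]; ring
    have htδT : t + δ ≤ T := by
      have h1 : (t + δ) = ∑ k, (t + δ) * z k := by
        rw [← Finset.mul_sum, hzsimp.2, mul_one]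
      have h2 : ∑ k, (t + δ) * z k ≤ ∑ k, ∑ j, z j * A j k :=
        Finset.sum_le_sum fun k _ => hzineq k
      have h3 : ∑ k, ∑ j, z j * A j k = ∑ j, z j * ∑ k, A j k := by
        rw [Finset.sum_comm]
        refine Finset.sum_congr rfl fun j _ => ?_
        rw [Finset.mul_sum]
      have h4 : ∀ j, ∑ k, A j k ≤ T :=
        fun j => Finset.single_le_sum
          (fun i _ => Finset.sum_nonneg fun k _ => (hA i k).le) (Finset.mem_univ j)
      have h5 : ∑ j, z j * ∑ k, A j k ≤ ∑ j, z j * T :=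
        Finset.sum_le_sum fun j _ => mul_le_mul_of_nonneg_left (h4 j) (hzsimp.1 j)
      have h6 : ∑ j, z j * T = T := by
        rw [← Finset.sum_mul, hzsimp.2, one_mul]
      linarith
    have hzC : (z, t + δ) ∈ C :=
      ⟨hzsimp, ⟨by positivity, htδT⟩, fun j => hzineq j⟩
    have := hPmax hzC
    simp only [htdef] at this
    have : t + δ ≤ t := this
    linarith
  have hxpos : ∀ j, 0 < x j := by
    intro j
    have h1 : 0 < t * x j := by rw [← heq j]; exact hypos j
    by_contra hneg
    push_neg at hneg
    nlinarith
  exact ⟨t, x, htpos, hxpos, hxsimp.2, heq⟩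

end Perron

section SumBounds

lemma hasSum_nonneg_ge {φ : ℕ → ℝ} {S : ℝ} (hφ0 : ∀ k, 0 ≤ φ k) (hφ : HasSum φ S) :
    0 ≤ S := hasSum_le (fun i => hφ0 i) hasSum_zero hφ

lemma sum_prod_le {φ ψ : ℕ → ℝ} {Sφ Sψ : ℝ} (hφ0 : ∀ k, 0 ≤ φ k) (hψ0 : ∀ k, 0 ≤ ψ k)
    (hφ : HasSum φ Sφ) (hψ : HasSum ψ Sψ) (E : Finset (ℕ × ℕ)) :
    ∑ p ∈ E, φ p.1 * ψ p.2 ≤ Sφ * Sψ := by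
  classical
  set A := E.image Prod.fst with hA
  set B := E.image Prod.snd with hB
  have hsub : E ⊆ A ×ˢ B := by
    intro p hp
    rw [Finset.mem_product]
    exact ⟨Finset.mem_image_of_mem _ hp, Finset.mem_image_of_mem _ hp⟩
  have h1 : ∑ p ∈ E, φ p.1 * ψ p.2 ≤ ∑ p ∈ A ×ˢ B, φ p.1 * ψ p.2 :=
    Finset.sum_le_sum_of_subset_of_nonneg hsub
      (fun p _ _ => mul_nonneg (hφ0 p.1) (hψ0 p.2))
  have h2 : ∑ p ∈ A ×ˢ B, φ p.1 * ψ p.2 = (∑ x ∈ A, φ x) * ∑ y ∈ B, ψ y := by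
    rw [Finset.sum_product, Finset.sum_mul]
    refine Finset.sum_congr rfl fun x _ => ?_
    rw [Finset.mul_sum]
  have h3 : (∑ x ∈ A, φ x) * ∑ y ∈ B, ψ y ≤ Sφ * Sψ := by
    apply mul_le_mul (sum_le_hasSum A (fun i _ => hφ0 i) hφ)
      (sum_le_hasSum B (fun i _ => hψ0 i) hψ)
      (Finset.sum_nonneg fun i _ => hψ0 i) (hasSum_nonneg_ge hφ0 hφ)
  linarith

lemma sum_le_sub_of_ne_zero {φ : ℕ → ℝ} {Sφ : ℝ} (hφ0 : ∀ k, 0 ≤ φ k) (hφ : HasSum φ Sφ)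
    {A : Finset ℕ} (hA : (0 : ℕ) ∉ A) : ∑ x ∈ A, φ x ≤ Sφ - φ 0 := by
  have h := sum_le_hasSum (insert 0 A) (fun i _ => hφ0 i) hφ
  rw [Finset.sum_insert hA] at h
  linarith

lemma sum_prod_le' {φ ψ : ℕ → ℝ} {Sφ Sψ : ℝ} (hφ0 : ∀ k, 0 ≤ φ k) (hψ0 : ∀ k, 0 ≤ ψ k)
    (hφ : HasSum φ Sφ) (hψ : HasSum ψ Sψ) (E : Finset (ℕ × ℕ))
    (hE : ∀ p ∈ E, p.1 ≠ 0) :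
    ∑ p ∈ E, φ p.1 * ψ p.2 ≤ (Sφ - φ 0) * Sψ := by
  classical
  set A := E.image Prod.fst with hA
  set B := E.image Prod.snd with hB
  have hsub : E ⊆ A ×ˢ B := by
    intro p hp
    rw [Finset.mem_product]
    exact ⟨Finset.mem_image_of_mem _ hp, Finset.mem_image_of_mem _ hp⟩
  have h0A : (0 : ℕ) ∉ A := by
    simp only [hA, Finset.mem_image]
    rintro ⟨p, hp, hp0⟩
    exact hE p hp hp0
  have h1 : ∑ p ∈ E, φ p.1 * ψ p.2 ≤ ∑ p ∈ A ×ˢ B, φ p.1 * ψ p.2 :=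
    Finset.sum_le_sum_of_subset_of_nonneg hsub
      (fun p _ _ => mul_nonneg (hφ0 p.1) (hψ0 p.2))
  have h2 : ∑ p ∈ A ×ˢ B, φ p.1 * ψ p.2 = (∑ x ∈ A, φ x) * ∑ y ∈ B, ψ y := by
    rw [Finset.sum_product, Finset.sum_mul]
    refine Finset.sum_congr rfl fun x _ => ?_
    rw [Finset.mul_sum]
  have h3 : (∑ x ∈ A, φ x) * ∑ y ∈ B, ψ y ≤ (Sφ - φ 0) * Sψ := by
    apply mul_le_mul (sum_le_sub_of_ne_zero hφ0 hφ h0A)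
      (sum_le_hasSum B (fun i _ => hψ0 i) hψ)
      (Finset.sum_nonneg fun i _ => hψ0 i)
    have := sum_le_sub_of_ne_zero hφ0 hφ h0A
    have h4 : 0 ≤ ∑ x ∈ A, φ x := Finset.sum_nonneg fun i _ => hφ0 i
    linarith
  linarith

lemma sum_weighted_prod_le {F G : ℕ → ℝ} {MF MG : ℝ}
    (hF0 : ∀ k, 0 ≤ F k) (hG0 : ∀ k, 0 ≤ G k)
    (hF : HasSum F 1) (hG : HasSum G 1)
    (hMF : HasSum (fun k : ℕ => (k : ℝ) * F k) MF)
    (hMG : HasSum (fun k : ℕ => (k : ℝ) * G k) MG) (E : Finset (ℕ × ℕ)) :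
    ∑ p ∈ E, ((p.1 : ℝ) + (p.2 : ℝ)) * (F p.1 * G p.2) ≤ MF + MG := by
  have e : ∀ p : ℕ × ℕ, ((p.1 : ℝ) + (p.2 : ℝ)) * (F p.1 * G p.2)
      = ((p.1 : ℝ) * F p.1) * G p.2 + F p.1 * ((p.2 : ℝ) * G p.2) := fun p => by ring
  rw [Finset.sum_congr rfl fun p _ => e p, Finset.sum_add_distrib]
  have h1 := sum_prod_le (fun k => mul_nonneg (Nat.cast_nonneg k) (hF0 k)) hG0 hMF hG E
  have h2 := sum_prod_le hF0 (fun k => mul_nonneg (Nat.cast_nonneg k) (hG0 k)) hF hMG E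
  linarith

end SumBounds

noncomputable def box (N : ℕ) : Finset (ℕ × ℕ) := Finset.Icc 1 N ×ˢ Finset.Icc 1 N

lemma mem_box {N : ℕ} {p : ℕ × ℕ} :
    p ∈ box N ↔ (1 ≤ p.1 ∧ p.1 ≤ N) ∧ (1 ≤ p.2 ∧ p.2 ≤ N) := by
  simp [box, Finset.mem_product, Finset.mem_Icc]

lemma box_mono {R N : ℕ} (h : R ≤ N) : box R ⊆ box N := by
  intro p hp
  rw [mem_box] at *
  omega

lemma coef_bound {K r c : ℝ} (hK : 0 < K) (m : ℕ) (hc : K * m ≤ c) :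
    (m : ℝ) * (Real.exp (-c) * Real.exp r) ≤ Real.exp r / K := by
  have h1 : Real.exp (-c) ≤ Real.exp (-(K * m)) := Real.exp_le_exp.mpr (by linarith)
  have h2 : K * (m : ℝ) ≤ Real.exp (K * (m : ℝ)) := by
    nlinarith [Real.add_one_le_exp (K * (m : ℝ))]
  have hexp : (0 : ℝ) < Real.exp (K * (m : ℝ)) := Real.exp_pos _
  have h3 : (m : ℝ) * Real.exp (-(K * (m : ℝ))) ≤ 1 / K := by
    rw [Real.exp_neg, ← div_eq_mul_inv]
    rw [div_le_div_iff₀ hexp hK]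
    nlinarith [h2]
  calc (m : ℝ) * (Real.exp (-c) * Real.exp r)
      ≤ (m : ℝ) * (Real.exp (-(K * (m : ℝ))) * Real.exp r) := by
        apply mul_le_mul_of_nonneg_left
          (mul_le_mul_of_nonneg_right h1 (Real.exp_pos r).le) (Nat.cast_nonneg m)
    _ = ((m : ℝ) * Real.exp (-(K * (m : ℝ)))) * Real.exp r := by ring
    _ ≤ (1 / K) * Real.exp r := mul_le_mul_of_nonneg_right h3 (Real.exp_pos r).le
    _ = Real.exp r / K := by ring

lemma stageA (r r' a b K K' : ℝ) (ha : 0 < a) (hb : 0 < b) (hK : 0 < K) (hK' : 0 < K')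
    (q q' : ℕ → ℝ)
    (hq : ∀ k, 0 ≤ q k) (hq1 : HasSum q 1)
    (hqmean : HasSum (fun k : ℕ => (k : ℝ) * q k) (Real.exp r))
    (hqpos : ∀ k : ℕ, 1 ≤ k → 0 < q k)
    (hq' : ∀ k, 0 ≤ q' k) (hq1' : HasSum q' 1)
    (hqmean' : HasSum (fun k : ℕ => (k : ℝ) * q' k) (Real.exp r'))
    (hqpos' : ∀ k : ℕ, 1 ≤ k → 0 < q' k)
    (N : ℕ) (hN : 1 ≤ N) :
    ∃ (lam : ℝ) (pi : ℕ × ℕ → ℝ),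
      rickerKernel a b K K' q q' (1,1) (1,1) ≤ lam ∧
      (∀ p, 0 ≤ pi p) ∧ (∀ p, p ∉ box N → pi p = 0) ∧
      (∑ p ∈ box N, pi p = 1) ∧
      (∀ p ∈ box N, ∑ s ∈ box N, pi s * rickerKernel a b K K' q q' s p = lam * pi p) ∧
      (∀ E : Finset (ℕ × ℕ), ∑ p ∈ E, pi p ≤ 1) ∧
      (∀ E : Finset (ℕ × ℕ), ∑ p ∈ E, ((p.1 : ℝ) + (p.2 : ℝ)) * pi p ≤
        (Real.exp r / K + Real.exp r' / K') / (rickerKernel a b K K' q q' (1,1) (1,1))) ∧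
      lam ≤ ∑ s ∈ box N, pi s *
        (1 - convPow (modPMF (K * ((s.1 : ℝ) + b * (s.2 : ℝ))) q) s.1 0) := by
  classical
  set Qk := rickerKernel a b K K' q q' with hQkdef
  set F : ℕ × ℕ → ℕ → ℝ :=
    fun s => convPow (modPMF (K * ((s.1 : ℝ) + b * (s.2 : ℝ))) q) s.1 with hFdef
  set G : ℕ × ℕ → ℕ → ℝ :=
    fun s => convPow (modPMF (K' * (a * (s.1 : ℝ) + (s.2 : ℝ))) q') s.2 with hGdef
  have hQFG : ∀ s p : ℕ × ℕ, Qk s p = F s p.1 * G s p.2 := fun s p => rfl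
  -- coordinate facts for positive s
  have hcF : ∀ s : ℕ × ℕ, 1 ≤ s.1 → 0 < K * ((s.1 : ℝ) + b * (s.2 : ℝ)) := by
    intro s h1
    have h1' : (1 : ℝ) ≤ (s.1 : ℝ) := by exact_mod_cast h1
    have h2' : (0 : ℝ) ≤ (s.2 : ℝ) := Nat.cast_nonneg _
    have hb2 : (0 : ℝ) ≤ b * (s.2 : ℝ) := mul_nonneg hb.le h2'
    exact mul_pos hK (by linarith)
  have hcG : ∀ s : ℕ × ℕ, 1 ≤ s.2 → 0 < K' * (a * (s.1 : ℝ) + (s.2 : ℝ)) := by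
    intro s h2
    have h2' : (1 : ℝ) ≤ (s.2 : ℝ) := by exact_mod_cast h2
    have h1' : (0 : ℝ) ≤ (s.1 : ℝ) := Nat.cast_nonneg _
    have ha2 : (0 : ℝ) ≤ a * (s.1 : ℝ) := mul_nonneg ha.le h1'
    exact mul_pos hK' (by linarith)
  have hfpos : ∀ s : ℕ × ℕ, 1 ≤ s.1 →
      ∀ k, 0 < modPMF (K * ((s.1 : ℝ) + b * (s.2 : ℝ))) q k :=
    fun s h1 k => modPMF_pos' (hcF s h1) hq hq1 hqpos k
  have hgpos : ∀ s : ℕ × ℕ, 1 ≤ s.2 →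
      ∀ k, 0 < modPMF (K' * (a * (s.1 : ℝ) + (s.2 : ℝ))) q' k :=
    fun s h2 k => modPMF_pos' (hcG s h2) hq' hq1' hqpos' k
  have hFpos : ∀ s : ℕ × ℕ, 1 ≤ s.1 → ∀ k, 0 < F s k :=
    fun s h1 k => convPow_pos (hfpos s h1) s.1 h1 k
  have hGpos : ∀ s : ℕ × ℕ, 1 ≤ s.2 → ∀ k, 0 < G s k :=
    fun s h2 k => convPow_pos (hgpos s h2) s.2 h2 k
  have hFsum : ∀ s : ℕ × ℕ, 1 ≤ s.1 → HasSum (F s) 1 :=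
    fun s h1 => convPow_hasSum (fun k => (hfpos s h1 k).le) (modPMF_hasSum hq1) s.1
  have hGsum : ∀ s : ℕ × ℕ, 1 ≤ s.2 → HasSum (G s) 1 :=
    fun s h2 => convPow_hasSum (fun k => (hgpos s h2 k).le) (modPMF_hasSum hq1') s.2
  have hFmean : ∀ s : ℕ × ℕ, 1 ≤ s.1 →
      HasSum (fun k : ℕ => (k : ℝ) * F s k)
        ((s.1 : ℝ) * (Real.exp (-(K * ((s.1 : ℝ) + b * (s.2 : ℝ)))) * Real.exp r)) :=
    fun s h1 => convPow_mean (fun k => (hfpos s h1 k).le) (modPMF_hasSum hq1)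
      (modPMF_mean hqmean) s.1
  have hGmean : ∀ s : ℕ × ℕ, 1 ≤ s.2 →
      HasSum (fun k : ℕ => (k : ℝ) * G s k)
        ((s.2 : ℝ) * (Real.exp (-(K' * (a * (s.1 : ℝ) + (s.2 : ℝ)))) * Real.exp r')) :=
    fun s h2 => convPow_mean (fun k => (hgpos s h2 k).le) (modPMF_hasSum hq1')
      (modPMF_mean hqmean') s.2
  have hQpos : ∀ s p : ℕ × ℕ, 1 ≤ s.1 → 1 ≤ s.2 → 0 < Qk s p := by
    intro s p h1 h2
    rw [hQFG]
    exact mul_pos (hFpos s h1 p.1) (hGpos s h2 p.2)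
  -- the inner row bounds
  have hrow_mom : ∀ s : ℕ × ℕ, 1 ≤ s.1 → 1 ≤ s.2 → ∀ E : Finset (ℕ × ℕ),
      ∑ p ∈ E, ((p.1 : ℝ) + (p.2 : ℝ)) * Qk s p ≤ Real.exp r / K + Real.exp r' / K' := by
    intro s h1 h2 E
    have hb1 : (s.1 : ℝ) * (Real.exp (-(K * ((s.1 : ℝ) + b * (s.2 : ℝ)))) * Real.exp r)
        ≤ Real.exp r / K := by
      apply coef_bound hK
      have h2' : (0 : ℝ) ≤ (s.2 : ℝ) := Nat.cast_nonneg _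
      have hb2 : (0 : ℝ) ≤ b * (s.2 : ℝ) := mul_nonneg hb.le h2'
      exact mul_le_mul_of_nonneg_left (by linarith) hK.le
    have hb2 : (s.2 : ℝ) * (Real.exp (-(K' * (a * (s.1 : ℝ) + (s.2 : ℝ)))) * Real.exp r')
        ≤ Real.exp r' / K' := by
      apply coef_bound hK'
      have h1' : (0 : ℝ) ≤ (s.1 : ℝ) := Nat.cast_nonneg _
      have ha2 : (0 : ℝ) ≤ a * (s.1 : ℝ) := mul_nonneg ha.le h1'
      exact mul_le_mul_of_nonneg_left (by linarith) hK'.le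
    have hkey := sum_weighted_prod_le (fun k => (hFpos s h1 k).le) (fun k => (hGpos s h2 k).le)
      (hFsum s h1) (hGsum s h2) (hFmean s h1) (hGmean s h2) E
    calc ∑ p ∈ E, ((p.1 : ℝ) + (p.2 : ℝ)) * Qk s p
        = ∑ p ∈ E, ((p.1 : ℝ) + (p.2 : ℝ)) * (F s p.1 * G s p.2) := by
          refine Finset.sum_congr rfl fun p _ => ?_; rw [hQFG]
      _ ≤ _ := hkey
      _ ≤ Real.exp r / K + Real.exp r' / K' := by linarith
  have hrow_sub : ∀ s : ℕ × ℕ, 1 ≤ s.1 → 1 ≤ s.2 → ∀ E : Finset (ℕ × ℕ),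
      (∀ p ∈ E, p.1 ≠ 0) → ∑ p ∈ E, Qk s p ≤ 1 - F s 0 := by
    intro s h1 h2 E hE
    have hkey := sum_prod_le' (fun k => (hFpos s h1 k).le) (fun k => (hGpos s h2 k).le)
      (hFsum s h1) (hGsum s h2) E hE
    calc ∑ p ∈ E, Qk s p = ∑ p ∈ E, F s p.1 * G s p.2 := by
          refine Finset.sum_congr rfl fun p _ => ?_; rw [hQFG]
      _ ≤ (1 - F s 0) * 1 := hkey
      _ = 1 - F s 0 := by ring
  -- Perron step
  have hne : ((1, 1) : ℕ × ℕ) ∈ box N := mem_box.mpr ⟨⟨le_refl 1, hN⟩, ⟨le_refl 1, hN⟩⟩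
  haveI : Nonempty ↥(box N) := ⟨⟨(1, 1), hne⟩⟩
  have hAs : ∀ i j : ↥(box N), 0 < Qk (i : ℕ × ℕ) (j : ℕ × ℕ) := by
    intro i j
    have hi := mem_box.mp i.2
    exact hQpos _ _ hi.1.1 hi.2.1
  obtain ⟨lam, x, hlampos, hxpos, hxsum, heig⟩ :=
    perron (ι := ↥(box N)) (fun i j => Qk (i : ℕ × ℕ) (j : ℕ × ℕ)) hAs
  set pi : ℕ × ℕ → ℝ := fun p => if h : p ∈ box N then x ⟨p, h⟩ else 0 with hpidef
  have hpi_box : ∀ (p : ℕ × ℕ) (h : p ∈ box N), pi p = x ⟨p, h⟩ := fun p h => dif_pos h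
  have hpi_nonneg : ∀ p, 0 ≤ pi p := by
    intro p
    by_cases h : p ∈ box N
    · rw [hpi_box p h]; exact (hxpos _).le
    · simp [hpidef, h]
  have hpi_zero : ∀ p, p ∉ box N → pi p = 0 := by
    intro p h; simp [hpidef, h]
  have hconv : ∀ g : ℕ × ℕ → ℝ,
      ∑ i : ↥(box N), x i * g (i : ℕ × ℕ) = ∑ p ∈ box N, pi p * g p := by
    intro g
    rw [← Finset.sum_coe_sort (box N) (fun p => pi p * g p)]
    refine Finset.sum_congr rfl fun i _ => ?_
    rw [hpi_box (i : ℕ × ℕ) i.2]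
  have hsum1 : ∑ p ∈ box N, pi p = 1 := by
    have := hconv (fun _ => 1)
    simp only [mul_one] at this
    rw [← this, hxsum]
  have heigen : ∀ p ∈ box N, ∑ s ∈ box N, pi s * Qk s p = lam * pi p := by
    intro p hp
    have := heig ⟨p, hp⟩
    rw [hconv (fun s => Qk s p)] at this
    rw [this, hpi_box p hp]
  -- partial sums of pi are at most 1
  have hpart : ∀ E : Finset (ℕ × ℕ), ∑ p ∈ E, pi p ≤ 1 := by
    intro E
    have e1 : ∑ p ∈ E ∩ box N, pi p = ∑ p ∈ E, pi p := by
      apply Finset.sum_subset Finset.inter_subset_left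
      intro p hpE hpn
      apply hpi_zero
      intro hbox
      exact hpn (Finset.mem_inter.mpr ⟨hpE, hbox⟩)
    rw [← e1, ← hsum1]
    exact Finset.sum_le_sum_of_subset_of_nonneg Finset.inter_subset_right
      (fun p _ _ => hpi_nonneg p)
  -- c0 ≤ lam
  have hc0 : Qk (1,1) (1,1) ≤ lam := by
    have hq11 : 0 < Qk (1,1) (1,1) := hQpos _ _ le_rfl le_rfl
    have h := heigen (1,1) hne
    have hsingle : pi (1,1) * Qk (1,1) (1,1) ≤ ∑ s ∈ box N, pi s * Qk s (1,1) := by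
      apply Finset.single_le_sum (f := fun s => pi s * Qk s (1,1))
        (fun s hs => mul_nonneg (hpi_nonneg s)
          (hQpos s (1,1) (mem_box.mp hs).1.1 (mem_box.mp hs).2.1).le) hne
    rw [h] at hsingle
    have hpi11 : 0 < pi (1,1) := by rw [hpi_box (1,1) hne]; exact hxpos _
    nlinarith
  have hq11pos : 0 < Qk (1,1) (1,1) := hQpos _ _ le_rfl le_rfl
  -- moment bound
  set Cm : ℝ := Real.exp r / K + Real.exp r' / K' with hCmdef
  have hCmpos : 0 < Cm := by
    have := Real.exp_pos r; have := Real.exp_pos r'; positivity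
  have hmom_box : ∑ p ∈ box N, ((p.1 : ℝ) + (p.2 : ℝ)) * pi p ≤ Cm / Qk (1,1) (1,1) := by
    set X := ∑ p ∈ box N, ((p.1 : ℝ) + (p.2 : ℝ)) * pi p with hXdef
    have hX0 : 0 ≤ X := Finset.sum_nonneg fun p _ => mul_nonneg
      (by positivity) (hpi_nonneg p)
    have hlamX : lam * X ≤ Cm := by
      have e1 : lam * X = ∑ p ∈ box N, ((p.1 : ℝ) + (p.2 : ℝ)) * (lam * pi p) := by
        rw [hXdef, Finset.mul_sum]
        refine Finset.sum_congr rfl fun p _ => by ring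
      have e2 : ∀ p ∈ box N, ((p.1 : ℝ) + (p.2 : ℝ)) * (lam * pi p)
          = ∑ s ∈ box N, pi s * (((p.1 : ℝ) + (p.2 : ℝ)) * Qk s p) := by
        intro p hp
        rw [← heigen p hp, Finset.mul_sum]
        refine Finset.sum_congr rfl fun s _ => by ring
      rw [e1, Finset.sum_congr rfl e2, Finset.sum_comm]
      have e3 : ∀ s ∈ box N,
          ∑ p ∈ box N, pi s * (((p.1 : ℝ) + (p.2 : ℝ)) * Qk s p) ≤ pi s * Cm := by
        intro s hs
        rw [← Finset.mul_sum]
        exact mul_le_mul_of_nonneg_left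
          (hrow_mom s (mem_box.mp hs).1.1 (mem_box.mp hs).2.1 (box N)) (hpi_nonneg s)
      calc ∑ s ∈ box N, ∑ p ∈ box N, pi s * (((p.1 : ℝ) + (p.2 : ℝ)) * Qk s p)
          ≤ ∑ s ∈ box N, pi s * Cm := Finset.sum_le_sum e3
        _ = Cm := by rw [← Finset.sum_mul, hsum1, one_mul]
    rw [le_div_iff₀ hq11pos]
    nlinarith
  have hmom : ∀ E : Finset (ℕ × ℕ), ∑ p ∈ E, ((p.1 : ℝ) + (p.2 : ℝ)) * pi p ≤
      Cm / Qk (1,1) (1,1) := by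
    intro E
    have e1 : ∑ p ∈ E ∩ box N, ((p.1 : ℝ) + (p.2 : ℝ)) * pi p
        = ∑ p ∈ E, ((p.1 : ℝ) + (p.2 : ℝ)) * pi p := by
      apply Finset.sum_subset Finset.inter_subset_left
      intro p hpE hpn
      have : pi p = 0 := hpi_zero p (fun hbox => hpn (Finset.mem_inter.mpr ⟨hpE, hbox⟩))
      rw [this, mul_zero]
    rw [← e1]
    calc ∑ p ∈ E ∩ box N, ((p.1 : ℝ) + (p.2 : ℝ)) * pi p
        ≤ ∑ p ∈ box N, ((p.1 : ℝ) + (p.2 : ℝ)) * pi p :=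
          Finset.sum_le_sum_of_subset_of_nonneg Finset.inter_subset_right
            (fun p _ _ => mul_nonneg (by positivity) (hpi_nonneg p))
      _ ≤ Cm / Qk (1,1) (1,1) := hmom_box
  -- lam upper bound via killing
  have hlam_up : lam ≤ ∑ s ∈ box N, pi s * (1 - F s 0) := by
    have e1 : lam = ∑ p ∈ box N, lam * pi p := by
      rw [← Finset.mul_sum, hsum1, mul_one]
    have e2 : ∀ p ∈ box N, lam * pi p = ∑ s ∈ box N, pi s * Qk s p :=
      fun p hp => (heigen p hp).symm
    rw [e1, Finset.sum_congr rfl e2, Finset.sum_comm]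
    have e3 : ∀ s ∈ box N, ∑ p ∈ box N, pi s * Qk s p ≤ pi s * (1 - F s 0) := by
      intro s hs
      rw [← Finset.mul_sum]
      apply mul_le_mul_of_nonneg_left ?_ (hpi_nonneg s)
      apply hrow_sub s (mem_box.mp hs).1.1 (mem_box.mp hs).2.1 (box N)
      intro p hp
      have := (mem_box.mp hp).1.1
      omega
    exact Finset.sum_le_sum e3
  exact ⟨lam, pi, hc0, hpi_nonneg, hpi_zero, hsum1, heigen, hpart, hmom, hlam_up⟩

lemma modPMF_nonneg {c : ℝ} {q : ℕ → ℝ} (hc : 0 ≤ c) (hq : ∀ k, 0 ≤ q k)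
    (hq1 : HasSum q 1) (k : ℕ) : 0 ≤ modPMF c q k := by
  have hE1 : Real.exp (-c) ≤ 1 := Real.exp_le_one_iff.mpr (by linarith)
  have hE0 : 0 ≤ Real.exp (-c) := (Real.exp_pos _).le
  have hq01 : q 0 ≤ 1 := le_hasSum hq1 0 (fun i _ => hq i)
  rcases Nat.eq_zero_or_pos k with hk | hk
  · subst hk
    have e0 : modPMF c q 0 = 1 - Real.exp (-c) * (1 - q 0) := by simp [modPMF]
    rw [e0]
    have : Real.exp (-c) * (1 - q 0) ≤ 1 :=
      mul_le_one₀ hE1 (by linarith [hq 0]) (by linarith [hq 0])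
    linarith
  · have hkne : k ≠ 0 := Nat.pos_iff_ne_zero.mp hk
    simp only [modPMF, if_neg hkne]
    exact mul_nonneg hE0 (hq k)

lemma tail_bound {π : ℕ × ℕ → ℝ} {M : ℝ} (hπ0 : ∀ p, 0 ≤ π p)
    (hmom : ∀ E : Finset (ℕ × ℕ), ∑ p ∈ E, ((p.1 : ℝ) + (p.2 : ℝ)) * π p ≤ M)
    (hsupp : ∀ p : ℕ × ℕ, π p ≠ 0 → 1 ≤ p.1 ∧ 1 ≤ p.2) (R : ℕ)
    (E : Finset (ℕ × ℕ)) (hE : ∀ p ∈ E, p ∉ box R) :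
    ∑ p ∈ E, π p ≤ M / ((R : ℝ) + 1) := by
  have hkey : ((R : ℝ) + 1) * ∑ p ∈ E, π p ≤ ∑ p ∈ E, ((p.1 : ℝ) + (p.2 : ℝ)) * π p := by
    rw [Finset.mul_sum]
    apply Finset.sum_le_sum
    intro p hp
    by_cases h0 : π p = 0
    · rw [h0]; simp
    · obtain ⟨h1, h2⟩ := hsupp p h0
      have hnb := hE p hp
      have hcoord : R + 1 ≤ p.1 + p.2 := by
        by_contra hcon
        exact hnb (mem_box.mpr (by omega))
      have hcast : ((R : ℝ) + 1) ≤ (p.1 : ℝ) + (p.2 : ℝ) := by exact_mod_cast hcoord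
      exact mul_le_mul_of_nonneg_right hcast (hπ0 p)
  have hpos : (0 : ℝ) < (R : ℝ) + 1 := by positivity
  rw [le_div_iff₀ hpos]
  calc (∑ p ∈ E, π p) * ((R : ℝ) + 1) = ((R : ℝ) + 1) * ∑ p ∈ E, π p := by ring
    _ ≤ ∑ p ∈ E, ((p.1 : ℝ) + (p.2 : ℝ)) * π p := hkey
    _ ≤ M := hmom E

end QSDwork

open QSDwork Topology

/-- The stochastic Ricker competition chain admits a quasi-stationary distribution:
there is λ ∈ (0,1) and a probability measure π on the all-positive states with
Σ_{(i,j)} π(i,j)·Q((i,j),(m,n)) = λ·π(m,n) for all m, n ≥ 1. -/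
theorem ricker_chain_qsd_exists
    (r r' a b K K' : ℝ) (ha : 0 < a) (hb : 0 < b) (hK : 0 < K) (hK' : 0 < K')
    (q q' : ℕ → ℝ)
    (hq : ∀ k, 0 ≤ q k) (hq1 : HasSum q 1)
    (hqmean : HasSum (fun k : ℕ => (k : ℝ) * q k) (Real.exp r))
    (hqvar : ∃ v : ℝ, HasSum (fun k : ℕ => (k : ℝ) ^ 2 * q k) v)
    (hqpos : ∀ k : ℕ, 1 ≤ k → 0 < q k)
    (hq' : ∀ k, 0 ≤ q' k) (hq1' : HasSum q' 1)
    (hqmean' : HasSum (fun k : ℕ => (k : ℝ) * q' k) (Real.exp r'))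
    (hqvar' : ∃ v : ℝ, HasSum (fun k : ℕ => (k : ℝ) ^ 2 * q' k) v)
    (hqpos' : ∀ k : ℕ, 1 ≤ k → 0 < q' k) :
    ∃ lam : ℝ, 0 < lam ∧ lam < 1 ∧
      ∃ π : ℕ × ℕ → ℝ, IsQSD (rickerKernel a b K K' q q') π lam := by
  classical
  set Qk := rickerKernel a b K K' q q' with hQkdef
  set c0 : ℝ := Qk (1, 1) (1, 1) with hc0def
  have hc0pos : 0 < c0 := by
    have hb1 : (0 : ℝ) < K * ((((1,1) : ℕ × ℕ).1 : ℝ) + b * (((1,1) : ℕ × ℕ).2 : ℝ)) := by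
      push_cast; nlinarith
    have hb2 : (0 : ℝ) < K' * (a * (((1,1) : ℕ × ℕ).1 : ℝ) + (((1,1) : ℕ × ℕ).2 : ℝ)) := by
      push_cast; nlinarith
    exact mul_pos (convPow_pos (modPMF_pos' hb1 hq hq1 hqpos) 1 le_rfl 1)
      (convPow_pos (modPMF_pos' hb2 hq' hq1' hqpos') 1 le_rfl 1)
  set Cm : ℝ := Real.exp r / K + Real.exp r' / K' with hCmdef
  have hCm : 0 < Cm := by
    have := Real.exp_pos r; have := Real.exp_pos r'; positivity
  set M : ℝ := Cm / c0 with hMdef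
  have hM : 0 < M := div_pos hCm hc0pos
  -- kernel bounds over all states
  have hcge : ∀ s : ℕ × ℕ, (0 : ℝ) ≤ K * ((s.1 : ℝ) + b * (s.2 : ℝ)) := by
    intro s
    have := Nat.cast_nonneg (α := ℝ) s.1
    have := Nat.cast_nonneg (α := ℝ) s.2
    have := mul_nonneg hb.le (Nat.cast_nonneg (α := ℝ) s.2)
    nlinarith
  have hcge' : ∀ s : ℕ × ℕ, (0 : ℝ) ≤ K' * (a * (s.1 : ℝ) + (s.2 : ℝ)) := by
    intro s
    have := Nat.cast_nonneg (α := ℝ) s.2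
    have := mul_nonneg ha.le (Nat.cast_nonneg (α := ℝ) s.1)
    nlinarith
  have hQ0 : ∀ s t : ℕ × ℕ, 0 ≤ Qk s t := by
    intro s t
    exact mul_nonneg
      (convPow_nonneg (modPMF_nonneg (hcge s) hq hq1) s.1 t.1)
      (convPow_nonneg (modPMF_nonneg (hcge' s) hq' hq1') s.2 t.2)
  have hQ1 : ∀ s t : ℕ × ℕ, Qk s t ≤ 1 := by
    intro s t
    exact mul_le_one₀
      (convPow_le_one (modPMF_nonneg (hcge s) hq hq1) (modPMF_hasSum hq1) s.1 t.1)
      (convPow_nonneg (modPMF_nonneg (hcge' s) hq' hq1') s.2 t.2)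
      (convPow_le_one (modPMF_nonneg (hcge' s) hq' hq1') (modPMF_hasSum hq1') s.2 t.2)
  -- dd and θ
  set dd : ℕ × ℕ → ℝ :=
    fun s => convPow (modPMF (K * ((s.1 : ℝ) + b * (s.2 : ℝ))) q) s.1 0 with hdddef
  have hcF : ∀ s : ℕ × ℕ, 1 ≤ s.1 → 0 < K * ((s.1 : ℝ) + b * (s.2 : ℝ)) := by
    intro s h1
    have h1' : (1 : ℝ) ≤ (s.1 : ℝ) := by exact_mod_cast h1
    have hb2 : (0 : ℝ) ≤ b * (s.2 : ℝ) := mul_nonneg hb.le (Nat.cast_nonneg _)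
    exact mul_pos hK (by linarith)
  have hdd_pos : ∀ s : ℕ × ℕ, 1 ≤ s.1 → 0 < dd s := fun s h1 =>
    convPow_zero_pos (modPMF_pos' (hcF s h1) hq hq1 hqpos) s.1
  have hdd_le1 : ∀ s : ℕ × ℕ, dd s ≤ 1 := fun s =>
    convPow_le_one (modPMF_nonneg (hcge s) hq hq1) (modPMF_hasSum hq1) s.1 0
  set R0 : ℕ := ⌈2 * M⌉₊ + 1 with hR0def
  have hR0ge : 2 * M ≤ (R0 : ℝ) + 1 := by
    have h := Nat.le_ceil (2 * M)
    have : ((⌈2 * M⌉₊ : ℕ) : ℝ) ≤ (R0 : ℝ) := by exact_mod_cast Nat.le_succ _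
    linarith
  have hR01 : 1 ≤ R0 := by omega
  have hboxne : ((1, 1) : ℕ × ℕ) ∈ QSDwork.box R0 := mem_box.mpr ⟨⟨le_rfl, hR01⟩, le_rfl, hR01⟩
  set θ : ℝ := (QSDwork.box R0).sup' ⟨(1, 1), hboxne⟩ (fun s => 1 - dd s) with hθdef
  have hθlt1 : θ < 1 := by
    refine (Finset.sup'_lt_iff ..).mpr ?_
    intro s hs
    linarith [hdd_pos s (mem_box.mp hs).1.1]
  have hθ0 : 0 ≤ θ := by
    refine le_trans ?_ (Finset.le_sup' (fun s => 1 - dd s) hboxne)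
    linarith [hdd_le1 (1, 1)]
  -- stage A for every N
  have mainA := fun N : ℕ => stageA r r' a b K K' ha hb hK hK' q q'
    hq hq1 hqmean hqpos hq' hq1' hqmean' hqpos' (N + 1) (by omega)
  choose Lam Pi hc0le hPi0 hPiz hPis1 hPieig hPipart hPimom hPiup using mainA
  have hPimom' : ∀ N (E : Finset (ℕ × ℕ)),
      ∑ p ∈ E, ((p.1 : ℝ) + (p.2 : ℝ)) * Pi N p ≤ M := fun N E => hPimom N E
  have hsupp : ∀ N p, Pi N p ≠ 0 → 1 ≤ p.1 ∧ 1 ≤ p.2 := by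
    intro N p h
    by_contra hcon
    exact h (hPiz N p (fun hmem => hcon ⟨(mem_box.mp hmem).1.1, (mem_box.mp hmem).2.1⟩))
  have htail : ∀ N R (E : Finset (ℕ × ℕ)), (∀ p ∈ E, p ∉ QSDwork.box R) →
      ∑ p ∈ E, Pi N p ≤ M / ((R : ℝ) + 1) :=
    fun N R E hE => tail_bound (hPi0 N) (hPimom' N) (hsupp N) R E hE
  -- stage B : uniform upper bound on Lam away from 1
  have hLam_up : ∀ N, Lam N ≤ (1 + θ) / 2 := by
    intro N
    have h10 := hPiup N
    have hsplit := Finset.sum_sdiff (f := fun s => Pi N s * (1 - dd s))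
      (Finset.inter_subset_left : QSDwork.box (N + 1) ∩ QSDwork.box R0 ⊆ QSDwork.box (N + 1))
    have hsplit2 := Finset.sum_sdiff (f := fun s => Pi N s)
      (Finset.inter_subset_left : QSDwork.box (N + 1) ∩ QSDwork.box R0 ⊆ QSDwork.box (N + 1))
    set σ := ∑ s ∈ QSDwork.box (N + 1) ∩ QSDwork.box R0, Pi N s with hσdef
    set τ := ∑ s ∈ QSDwork.box (N + 1) \ (QSDwork.box (N + 1) ∩ QSDwork.box R0), Pi N s with hτdef
    have hστ : τ + σ = 1 := by rw [hσdef, hτdef, hsplit2, hPis1 N]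
    have hτ0 : 0 ≤ τ := Finset.sum_nonneg fun s _ => hPi0 N s
    have hτM : τ ≤ M / ((R0 : ℝ) + 1) := by
      apply htail
      intro p hp
      rw [Finset.mem_sdiff] at hp
      exact fun hR => hp.2 (Finset.mem_inter.mpr ⟨hp.1, hR⟩)
    have hτhalf : τ ≤ 1 / 2 := by
      have h2 : M / ((R0 : ℝ) + 1) ≤ 1 / 2 := by
        rw [div_le_iff₀ (by positivity)]
        linarith
      linarith
    have hbound1 : ∑ s ∈ QSDwork.box (N + 1) ∩ QSDwork.box R0, Pi N s * (1 - dd s) ≤ θ * σ := by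
      rw [hσdef, Finset.mul_sum]
      apply Finset.sum_le_sum
      intro s hs
      have hsR := Finset.mem_inter.mp hs
      have h1 : 1 - dd s ≤ θ := Finset.le_sup' (fun s => 1 - dd s) hsR.2
      calc Pi N s * (1 - dd s) ≤ Pi N s * θ :=
            mul_le_mul_of_nonneg_left h1 (hPi0 N s)
        _ = θ * Pi N s := by ring
    have hbound2 : ∑ s ∈ QSDwork.box (N + 1) \ (QSDwork.box (N + 1) ∩ QSDwork.box R0), Pi N s * (1 - dd s) ≤ τ := by
      rw [hτdef]
      apply Finset.sum_le_sum
      intro s hs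
      have hsb := (Finset.mem_sdiff.mp hs).1
      have h1 : 1 - dd s ≤ 1 := by linarith [hdd_pos s (mem_box.mp hsb).1.1]
      calc Pi N s * (1 - dd s) ≤ Pi N s * 1 :=
            mul_le_mul_of_nonneg_left h1 (hPi0 N s)
        _ = Pi N s := by ring
    have : Lam N ≤ τ + θ * σ := by
      calc Lam N ≤ ∑ s ∈ QSDwork.box (N + 1), Pi N s * (1 - dd s) := h10
        _ = ∑ s ∈ QSDwork.box (N + 1) \ (QSDwork.box (N + 1) ∩ QSDwork.box R0), Pi N s * (1 - dd s)
            + ∑ s ∈ QSDwork.box (N + 1) ∩ QSDwork.box R0, Pi N s * (1 - dd s) := hsplit.symm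
        _ ≤ τ + θ * σ := by linarith
    nlinarith
  -- stage C : extraction of a convergent subsequence
  set SS : Set ((ℕ × ℕ → ℝ) × ℝ) :=
    (Set.pi Set.univ (fun _ : ℕ × ℕ => Set.Icc (0 : ℝ) 1)) ×ˢ (Set.Icc 0 1) with hSSdef
  have hSScomp : IsCompact SS :=
    (isCompact_univ_pi fun _ => isCompact_Icc).prod isCompact_Icc
  have hmem : ∀ N, ((Pi N, Lam N) : (ℕ × ℕ → ℝ) × ℝ) ∈ SS := by
    intro N
    constructor
    · intro p _
      refine ⟨hPi0 N p, ?_⟩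
      have := hPipart N {p}
      simpa using this
    · exact ⟨by linarith [hc0le N, hc0pos], by linarith [hLam_up N, hθlt1]⟩
  obtain ⟨⟨πl, laml⟩, hlim_mem, φ, hφmono, hφtend⟩ := hSScomp.tendsto_subseq hmem
  have hπconvfull : Tendsto (fun k => Pi (φ k)) atTop (𝓝 πl) :=
    (continuous_fst.tendsto _).comp hφtend
  have hπconv : ∀ p, Tendsto (fun k => Pi (φ k) p) atTop (𝓝 (πl p)) :=
    fun p => tendsto_pi_nhds.mp hπconvfull p
  have hlamconv : Tendsto (fun k => Lam (φ k)) atTop (𝓝 laml) :=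
    (continuous_snd.tendsto _).comp hφtend
  -- limit properties
  have hπl0 : ∀ p, 0 ≤ πl p :=
    fun p => ge_of_tendsto (hπconv p) (Eventually.of_forall fun k => hPi0 (φ k) p)
  have hπlzero : ∀ p : ℕ × ℕ, p.1 = 0 ∨ p.2 = 0 → πl p = 0 := by
    intro p hp
    have hzero : ∀ N, Pi N p = 0 := by
      intro N
      apply hPiz
      intro hmem'
      have := mem_box.mp hmem'
      omega
    have : Tendsto (fun k => Pi (φ k) p) atTop (𝓝 0) := by
      simpa [hzero] using tendsto_const_nhds (α := ℝ) (f := atTop (α := ℕ))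
    exact tendsto_nhds_unique (hπconv p) this
  have hπl_part : ∀ E : Finset (ℕ × ℕ), ∑ p ∈ E, πl p ≤ 1 := by
    intro E
    have hlim := tendsto_finset_sum E (fun p _ => hπconv p)
    exact le_of_tendsto hlim (Eventually.of_forall fun k => hPipart (φ k) E)
  have hπl_mom : ∀ E : Finset (ℕ × ℕ), ∑ p ∈ E, ((p.1 : ℝ) + (p.2 : ℝ)) * πl p ≤ M := by
    intro E
    have hlim := tendsto_finset_sum E (fun p (_ : p ∈ E) => (hπconv p).const_mul ((p.1 : ℝ) + (p.2 : ℝ)))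
    exact le_of_tendsto hlim (Eventually.of_forall fun k => hPimom' (φ k) E)
  have hπl_supp : ∀ p : ℕ × ℕ, πl p ≠ 0 → 1 ≤ p.1 ∧ 1 ≤ p.2 := by
    intro p hne
    by_contra hcon
    refine hne (hπlzero p ?_)
    omega
  have hπl_tail : ∀ R (E : Finset (ℕ × ℕ)), (∀ p ∈ E, p ∉ QSDwork.box R) →
      ∑ p ∈ E, πl p ≤ M / ((R : ℝ) + 1) :=
    fun R E hE => tail_bound hπl0 hπl_mom hπl_supp R E hE
  have hπl_sum : Summable πl := summable_of_sum_le (fun p => hπl0 p) hπl_part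
  have htsum_ge : ∀ R : ℕ, 1 - M / ((R : ℝ) + 1) ≤ tsum πl := by
    intro R
    have hNbound : ∀ N, 1 - M / ((R : ℝ) + 1) ≤ ∑ p ∈ QSDwork.box R, Pi N p := by
      intro N
      have hs := Finset.sum_sdiff (f := Pi N)
        (Finset.inter_subset_left : QSDwork.box (N + 1) ∩ QSDwork.box R ⊆ QSDwork.box (N + 1))
      have hτ : ∑ p ∈ QSDwork.box (N + 1) \ (QSDwork.box (N + 1) ∩ QSDwork.box R), Pi N p ≤ M / ((R : ℝ) + 1) := by
        apply htail
        intro p hp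
        rw [Finset.mem_sdiff] at hp
        exact fun hR => hp.2 (Finset.mem_inter.mpr ⟨hp.1, hR⟩)
      have hsub : ∑ p ∈ QSDwork.box (N + 1) ∩ QSDwork.box R, Pi N p ≤ ∑ p ∈ QSDwork.box R, Pi N p :=
        Finset.sum_le_sum_of_subset_of_nonneg Finset.inter_subset_right
          (fun p _ _ => hPi0 N p)
      rw [hPis1 N] at hs
      linarith
    have hlim := tendsto_finset_sum (QSDwork.box R) (fun p (_ : p ∈ QSDwork.box R) => hπconv p)
    have h1 : 1 - M / ((R : ℝ) + 1) ≤ ∑ p ∈ QSDwork.box R, πl p :=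
      ge_of_tendsto hlim (Eventually.of_forall fun k => hNbound (φ k))
    calc 1 - M / ((R : ℝ) + 1) ≤ ∑ p ∈ QSDwork.box R, πl p := h1
      _ ≤ tsum πl := Summable.sum_le_tsum _ (fun p _ => hπl0 p) hπl_sum
  have htsum1 : tsum πl = 1 := by
    refine le_antisymm (Summable.tsum_le_of_sum_le hπl_sum hπl_part) ?_
    have hlim : Tendsto (fun R : ℕ => 1 - M / ((R : ℝ) + 1)) atTop (𝓝 1) := by
      have h1 : Tendsto (fun R : ℕ => M / ((R : ℝ) + 1)) atTop (𝓝 0) := by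
        have h2 := tendsto_one_div_add_atTop_nhds_zero_nat.const_mul M
        simp only [mul_zero] at h2
        convert h2 using 2 with R
        · ring
      have := h1.const_sub 1
      simpa using this
    exact le_of_tendsto hlim (Eventually.of_forall htsum_ge)
  have hπlHasSum : HasSum πl 1 := htsum1 ▸ hπl_sum.hasSum
  -- eigenvalue bounds
  have hlaml_ge : c0 ≤ laml :=
    ge_of_tendsto hlamconv (Eventually.of_forall fun k => hc0le (φ k))
  have hlaml_le : laml ≤ (1 + θ) / 2 :=
    le_of_tendsto hlamconv (Eventually.of_forall fun k => hLam_up (φ k))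
  have hlaml_pos : 0 < laml := lt_of_lt_of_le hc0pos hlaml_ge
  have hlaml_lt1 : laml < 1 := by linarith
  -- the eigen equation in the limit
  have heigenl : ∀ p : ℕ × ℕ, 1 ≤ p.1 → 1 ≤ p.2 →
      HasSum (fun s : ℕ × ℕ => πl s * Qk s p) (laml * πl p) := by
    intro p hp1 hp2
    set ff : ℕ × ℕ → ℝ := fun s => πl s * Qk s p with hffdef
    have hfnn : ∀ s : ℕ × ℕ, 0 ≤ ff s := fun s => mul_nonneg (hπl0 s) (hQ0 s p)
    have hfle : ∀ s : ℕ × ℕ, ff s ≤ πl s := fun s => by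
      calc ff s = πl s * Qk s p := rfl
        _ ≤ πl s * 1 := mul_le_mul_of_nonneg_left (hQ1 s p) (hπl0 s)
        _ = πl s := mul_one _
    have hsummable : Summable ff := Summable.of_nonneg_of_le hfnn hfle hπl_sum
    set T : ℝ := ∑' s : ℕ × ℕ, ff s with hTdef
    have hkey : ∀ R : ℕ, |T - laml * πl p| ≤ 2 * (M / ((R : ℝ) + 1)) := by
      intro R
      have hsplit := Summable.sum_add_tsum_compl (s := QSDwork.box R) hsummable
      have hcompl_le : (∑' s : ↑((↑(QSDwork.box R) : Set (ℕ × ℕ))ᶜ), ff ↑s) ≤ M / ((R : ℝ) + 1) := by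
        apply Summable.tsum_le_of_sum_le (hsummable.subtype _)
        intro W
        have heq : ∑ i ∈ W, ff ↑i = ∑ v ∈ W.image Subtype.val, ff v := by
          rw [Finset.sum_image (fun x _ y _ h => Subtype.coe_injective h)]
        calc ∑ i ∈ W, (ff ∘ Subtype.val) i = ∑ v ∈ W.image Subtype.val, ff v := heq
          _ ≤ ∑ v ∈ W.image Subtype.val, πl v :=
            Finset.sum_le_sum fun v _ => hfle v
          _ ≤ M / ((R : ℝ) + 1) := by
            apply hπl_tail R
            intro v hv
            obtain ⟨i, hiW, rfl⟩ := Finset.mem_image.mp hv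
            exact fun hbox => i.2 (Finset.mem_coe.mpr hbox)
      have hcompl_0 : 0 ≤ (∑' s : ↑((↑(QSDwork.box R) : Set (ℕ × ℕ))ᶜ), ff ↑s) :=
        tsum_nonneg fun i => hfnn ↑i
      have hα : |T - ∑ s ∈ QSDwork.box R, ff s| ≤ M / ((R : ℝ) + 1) := by
        rw [abs_le]
        constructor <;> linarith
      have hstep : ∀ k, R ≤ k → p.1 ≤ k → p.2 ≤ k →
          |∑ s ∈ QSDwork.box R, Pi (φ k) s * Qk s p - Lam (φ k) * Pi (φ k) p| ≤ M / ((R : ℝ) + 1) := by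
        intro k hRk hp1k hp2k
        have hNk : k ≤ φ k := hφmono.le_apply
        have hpbox : p ∈ QSDwork.box (φ k + 1) := mem_box.mpr ⟨⟨hp1, by omega⟩, hp2, by omega⟩
        have heq2 := hPieig (φ k) p hpbox
        rw [← hQkdef] at heq2
        have hRN : QSDwork.box R ⊆ QSDwork.box (φ k + 1) := box_mono (by omega)
        have hsd := Finset.sum_sdiff (f := fun s => Pi (φ k) s * Qk s p) hRN
        have hdiff_le : ∑ s ∈ QSDwork.box (φ k + 1) \ QSDwork.box R, Pi (φ k) s * Qk s p ≤ M / ((R : ℝ) + 1) := by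
          calc ∑ s ∈ QSDwork.box (φ k + 1) \ QSDwork.box R, Pi (φ k) s * Qk s p
              ≤ ∑ s ∈ QSDwork.box (φ k + 1) \ QSDwork.box R, Pi (φ k) s :=
                Finset.sum_le_sum fun s _ => by
                  calc Pi (φ k) s * Qk s p ≤ Pi (φ k) s * 1 :=
                        mul_le_mul_of_nonneg_left (hQ1 s p) (hPi0 (φ k) s)
                    _ = Pi (φ k) s := mul_one _
            _ ≤ M / ((R : ℝ) + 1) := htail (φ k) R _ (fun s hs => (Finset.mem_sdiff.mp hs).2)
        have hdiff_0 : 0 ≤ ∑ s ∈ QSDwork.box (φ k + 1) \ QSDwork.box R, Pi (φ k) s * Qk s p :=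
          Finset.sum_nonneg fun s _ => mul_nonneg (hPi0 (φ k) s) (hQ0 s p)
        rw [abs_le]
        constructor <;> linarith
      have hlim2 : Tendsto
          (fun k => |∑ s ∈ QSDwork.box R, Pi (φ k) s * Qk s p - Lam (φ k) * Pi (φ k) p|) atTop
          (𝓝 |∑ s ∈ QSDwork.box R, πl s * Qk s p - laml * πl p|) := by
        apply Tendsto.abs
        apply Tendsto.sub
        · exact tendsto_finset_sum _ (fun s _ => (hπconv s).mul_const _)
        · exact hlamconv.mul (hπconv p)
      have hγ : |∑ s ∈ QSDwork.box R, πl s * Qk s p - laml * πl p| ≤ M / ((R : ℝ) + 1) := by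
        apply le_of_tendsto hlim2
        filter_upwards [eventually_ge_atTop R, eventually_ge_atTop p.1, eventually_ge_atTop p.2]
          with k h1 h2 h3
        exact hstep k h1 h2 h3
      have hbox_eq : ∑ s ∈ QSDwork.box R, ff s = ∑ s ∈ QSDwork.box R, πl s * Qk s p := rfl
      calc |T - laml * πl p|
          ≤ |T - ∑ s ∈ QSDwork.box R, ff s| + |∑ s ∈ QSDwork.box R, ff s - laml * πl p| := abs_sub_le _ _ _
        _ = |T - ∑ s ∈ QSDwork.box R, ff s| + |∑ s ∈ QSDwork.box R, πl s * Qk s p - laml * πl p| := by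
            rw [hbox_eq]
        _ ≤ 2 * (M / ((R : ℝ) + 1)) := by linarith
    have hzero : |T - laml * πl p| ≤ 0 := by
      have hlim : Tendsto (fun R : ℕ => 2 * (M / ((R : ℝ) + 1))) atTop (𝓝 0) := by
        have h2 := tendsto_one_div_add_atTop_nhds_zero_nat.const_mul (2 * M)
        simp only [mul_zero] at h2
        convert h2 using 2 with R
        ring
      exact ge_of_tendsto hlim (Eventually.of_forall hkey)
    have hTeq : T = laml * πl p := by
      have h1 := abs_nonneg (T - laml * πl p)
      have habs : |T - laml * πl p| = 0 := le_antisymm hzero h1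
      have h2 := abs_eq_zero.mp habs
      linarith
    have hfin : HasSum ff T := by
      rw [hTdef]
      exact hsummable.hasSum
    exact hTeq ▸ hfin
  exact ⟨laml, hlaml_pos, hlaml_lt1, πl, hπl0, hπlzero, hπlHasSum, heigenl⟩
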